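/- Let E ⊂ ℝⁿ be finite, Γ⃗₀ a shape field on E, M₀ > 0, and D = dim P. For x ∈ E and S ⊆ E, define Γ(x,S) as the set of polynomials P^x ∈ P such that there exists a Whitney field P⃗ = (P^y)_{y∈S∪{x}} on S∪{x} with ‖P⃗‖_{Ċ^m(S∪{x})} ≤ M₀ and P^y ∈ Γ₀(y, M₀) for all y ∈ S∪{x}. Fix x ∈ E and l ≥ 0, and suppose Γ(x,S) ≠ ∅ for all S ⊆ E with #(S) ≤ (D+2)^{l+1}. Then the intersection Γ_l^{fp}(x, M₀) := ⋂_{S⊆E, #(S)≤(D+2)^l} Γ(x,S) is nonempty. -/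
import Mathlib


noncomputable section

/-- Iterated partial derivative `∂^β` of a multivariate polynomial. -/
def pdiff {n : ℕ} (β : Fin n → ℕ) (P : MvPolynomial (Fin n) ℝ) :
    MvPolynomial (Fin n) ℝ :=
  (List.finRange n).foldr (fun i Q => (fun R => MvPolynomial.pderiv i R)^[β i] Q) P

/-- `∂^β P` evaluated at a point of Euclidean space. -/
def pdEval {n : ℕ} (β : Fin n → ℕ) (P : MvPolynomial (Fin n) ℝ)
    (x : EuclideanSpace ℝ (Fin n)) : ℝ :=
  MvPolynomial.eval (fun i => x i) (pdiff β P)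

/-- The Whitney seminorm bound: `‖(P^y)_{y ∈ T}‖_{Ċ^m(T)} ≤ M₀`. -/
def WhitneyNormLE (m n : ℕ) (M₀ : ℝ) (T : Set (EuclideanSpace ℝ (Fin n)))
    (P : EuclideanSpace ℝ (Fin n) → MvPolynomial (Fin n) ℝ) : Prop :=
  ∀ z ∈ T, ∀ w ∈ T, z ≠ w → ∀ α : Fin n → ℕ, (∑ i, α i) ≤ m →
    |pdEval α (P z - P w) z| ≤ M₀ * dist z w ^ (m - ∑ i, α i)

/-- `Γ(x, S)`: the set of `P^x ∈ 𝒫` arising from Whitney fields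
`(P^y)_{y ∈ S ∪ {x}}` of `Ċ^m`-seminorm at most `M₀` with `P^y ∈ Γ₀(y, M₀)`
for all `y ∈ S ∪ {x}`. -/
def GammaS (m n : ℕ) (Γ₀ : EuclideanSpace ℝ (Fin n) → ℝ → Set (MvPolynomial (Fin n) ℝ))
    (M₀ : ℝ) (x : EuclideanSpace ℝ (Fin n)) (S : Set (EuclideanSpace ℝ (Fin n))) :
    Set (MvPolynomial (Fin n) ℝ) :=
  {Px | ∃ P : EuclideanSpace ℝ (Fin n) → MvPolynomial (Fin n) ℝ,
    P x = Px ∧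
    (∀ y ∈ S ∪ {x}, (P y).totalDegree ≤ m - 1 ∧ P y ∈ Γ₀ y M₀) ∧
    WhitneyNormLE m n M₀ (S ∪ {x}) P}

open MvPolynomial in
lemma pd_iter_add {n : ℕ} (i : Fin n) (k : ℕ) (P Q : MvPolynomial (Fin n) ℝ) :
    (fun R => pderiv i R)^[k] (P + Q)
      = (fun R => pderiv i R)^[k] P + (fun R => pderiv i R)^[k] Q := by
  induction k generalizing P Q with
  | zero => rfl
  | succ k ih => rw [Function.iterate_succ_apply, Function.iterate_succ_apply,
      Function.iterate_succ_apply, map_add, ih]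

open MvPolynomial in
lemma pd_iter_smul {n : ℕ} (i : Fin n) (k : ℕ) (c : ℝ) (P : MvPolynomial (Fin n) ℝ) :
    (fun R => pderiv i R)^[k] (c • P) = c • (fun R => pderiv i R)^[k] P := by
  induction k generalizing P with
  | zero => rfl
  | succ k ih => rw [Function.iterate_succ_apply, Function.iterate_succ_apply,
      Derivation.map_smul, ih]

open MvPolynomial in
lemma foldr_add {n : ℕ} (β : Fin n → ℕ) (l : List (Fin n)) (P Q : MvPolynomial (Fin n) ℝ) :
    l.foldr (fun i Q => (fun R => pderiv i R)^[β i] Q) (P + Q)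
      = l.foldr (fun i Q => (fun R => pderiv i R)^[β i] Q) P
        + l.foldr (fun i Q => (fun R => pderiv i R)^[β i] Q) Q := by
  induction l generalizing P Q with
  | nil => rfl
  | cons i l ih => simp only [List.foldr_cons, ih, pd_iter_add]

open MvPolynomial in
lemma foldr_smul {n : ℕ} (β : Fin n → ℕ) (l : List (Fin n)) (c : ℝ) (P : MvPolynomial (Fin n) ℝ) :
    l.foldr (fun i Q => (fun R => pderiv i R)^[β i] Q) (c • P)
      = c • l.foldr (fun i Q => (fun R => pderiv i R)^[β i] Q) P := by
  induction l generalizing P with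
  | nil => rfl
  | cons i l ih => simp only [List.foldr_cons, ih, pd_iter_smul]

lemma pdEval_add {n : ℕ} (β : Fin n → ℕ) (P Q : MvPolynomial (Fin n) ℝ)
    (z : EuclideanSpace ℝ (Fin n)) :
    pdEval β (P + Q) z = pdEval β P z + pdEval β Q z := by
  unfold pdEval pdiff
  rw [foldr_add, map_add]

lemma pdEval_smul {n : ℕ} (β : Fin n → ℕ) (c : ℝ) (P : MvPolynomial (Fin n) ℝ)
    (z : EuclideanSpace ℝ (Fin n)) :
    pdEval β (c • P) z = c * pdEval β P z := by
  unfold pdEval pdiff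
  rw [foldr_smul, MvPolynomial.smul_eval]

lemma gammaS_mono {m n : ℕ} {Γ₀ : EuclideanSpace ℝ (Fin n) → ℝ → Set (MvPolynomial (Fin n) ℝ)}
    {M₀ : ℝ} {x : EuclideanSpace ℝ (Fin n)} {S S' : Set (EuclideanSpace ℝ (Fin n))}
    (h : S ⊆ S') : GammaS m n Γ₀ M₀ x S' ⊆ GammaS m n Γ₀ M₀ x S := by
  have hsub : S ∪ {x} ⊆ S' ∪ {x} := Set.union_subset_union_left _ h
  rintro Px ⟨P, h1, h2, h3⟩
  exact ⟨P, h1, fun y hy => h2 y (hsub hy),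
    fun z hz w hw => h3 z (hsub hz) w (hsub hw)⟩

lemma gammaS_convex {m n : ℕ} {Γ₀ : EuclideanSpace ℝ (Fin n) → ℝ → Set (MvPolynomial (Fin n) ℝ)}
    {M₀ : ℝ} (hM₀ : 0 < M₀) {x : EuclideanSpace ℝ (Fin n)} {S : Set (EuclideanSpace ℝ (Fin n))}
    (hΓ : ∀ y ∈ S ∪ {x}, Convex ℝ (Γ₀ y M₀)) :
    Convex ℝ (GammaS m n Γ₀ M₀ x S) := by
  rintro Pa ⟨P, hP1, hP2, hP3⟩ Pb ⟨Q, hQ1, hQ2, hQ3⟩ a b ha hb hab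
  refine ⟨fun y => a • P y + b • Q y, show a • P x + b • Q x = _ by rw [hP1, hQ1], ?_, ?_⟩
  · intro y hy
    refine ⟨?_, hΓ y hy (hP2 y hy).2 (hQ2 y hy).2 ha hb hab⟩
    refine le_trans (MvPolynomial.totalDegree_add _ _) (max_le ?_ ?_)
    · exact le_trans (MvPolynomial.totalDegree_smul_le _ _) (hP2 y hy).1
    · exact le_trans (MvPolynomial.totalDegree_smul_le _ _) (hQ2 y hy).1
  · intro z hz w hw hzw α hα
    have key : (a • P z + b • Q z) - (a • P w + b • Q w)
        = a • (P z - P w) + b • (Q z - Q w) := by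
      module
    rw [key, pdEval_add, pdEval_smul, pdEval_smul]
    have hbound : 0 ≤ M₀ * dist z w ^ (m - ∑ i, α i) :=
      mul_nonneg hM₀.le (pow_nonneg dist_nonneg _)
    calc |a * pdEval α (P z - P w) z + b * pdEval α (Q z - Q w) z|
        ≤ |a * pdEval α (P z - P w) z| + |b * pdEval α (Q z - Q w) z| := abs_add_le _ _
      _ = a * |pdEval α (P z - P w) z| + b * |pdEval α (Q z - Q w) z| := by
          rw [abs_mul, abs_mul, abs_of_nonneg ha, abs_of_nonneg hb]
      _ ≤ a * (M₀ * dist z w ^ (m - ∑ i, α i)) + b * (M₀ * dist z w ^ (m - ∑ i, α i)) := by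
          gcongr
          · exact hP3 z hz w hw hzw α hα
          · exact hQ3 z hz w hw hzw α hα
      _ = M₀ * dist z w ^ (m - ∑ i, α i) := by rw [← add_mul, hab, one_mul]

/-- Lemma 10.1: if `Γ(x, S) ≠ ∅` for all `S ⊆ E` with `#(S) ≤ (D+2)^{l+1}`, then
`Γ_l^{fp}(x, M₀) = ⋂_{S ⊆ E, #(S) ≤ (D+2)^l} Γ(x, S)` is nonempty.
Here `D = dim 𝒫`. -/
theorem fp_intersection_nonempty (m n : ℕ) (hm : 0 < m) (hn : 0 < n)
    (E : Set (EuclideanSpace ℝ (Fin n))) (hE : E.Finite)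
    (Γ₀ : EuclideanSpace ℝ (Fin n) → ℝ → Set (MvPolynomial (Fin n) ℝ))
    (hconv : ∀ x ∈ E, ∀ M : ℝ, 0 < M → Convex ℝ (Γ₀ x M))
    (hdeg : ∀ x ∈ E, ∀ M : ℝ, 0 < M → ∀ P ∈ Γ₀ x M, P.totalDegree ≤ m - 1)
    (hmono : ∀ x ∈ E, ∀ M' M : ℝ, 0 < M' → M' ≤ M → Γ₀ x M' ⊆ Γ₀ x M)
    (M₀ : ℝ) (hM₀ : 0 < M₀) (x : EuclideanSpace ℝ (Fin n)) (hx : x ∈ E) (l : ℕ)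
    (D : ℕ) (hD : D = Module.finrank ℝ (MvPolynomial.restrictTotalDegree (Fin n) ℝ (m - 1)))
    (hne : ∀ S : Set (EuclideanSpace ℝ (Fin n)), S ⊆ E → S.ncard ≤ (D + 2) ^ (l + 1) →
      (GammaS m n Γ₀ M₀ x S).Nonempty) :
    ∃ Px : MvPolynomial (Fin n) ℝ,
      ∀ S : Set (EuclideanSpace ℝ (Fin n)), S ⊆ E → S.ncard ≤ (D + 2) ^ l →
        Px ∈ GammaS m n Γ₀ M₀ x S := by
  classical
  set K := MvPolynomial.restrictTotalDegree (Fin n) ℝ (m - 1) with hK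
  set F : Finset (EuclideanSpace ℝ (Fin n)) → Set K :=
    fun t => Subtype.val ⁻¹' (GammaS m n Γ₀ M₀ x (↑t : Set (EuclideanSpace ℝ (Fin n)))) with hF
  set s : Finset (Finset (EuclideanSpace ℝ (Fin n))) :=
    hE.toFinset.powerset.filter (fun t => t.card ≤ (D + 2) ^ l) with hs
  have hsub : ∀ t ∈ s, (↑t : Set (EuclideanSpace ℝ (Fin n))) ⊆ E := by
    intro t ht
    rw [hs, Finset.mem_filter, Finset.mem_powerset] at ht
    intro y hy
    simpa using hE.mem_toFinset.mp (ht.1 hy)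
  have hmain : (⋂ t ∈ s, F t).Nonempty := by
    apply Convex.helly_theorem' (𝕜 := ℝ)
    · -- convexity
      intro t ht
      apply Convex.is_linear_preimage ?_ (K.subtype.isLinear)
      apply gammaS_convex hM₀
      intro y hy
      rcases hy with hy | hy
      · exact hconv y (hsub t ht hy) M₀ hM₀
      · rw [Set.mem_singleton_iff] at hy; subst hy; exact hconv y hx M₀ hM₀
    · -- intersection property
      intro I hI hIcard
      set T : Finset (EuclideanSpace ℝ (Fin n)) := I.biUnion id with hT
      have hTE : (↑T : Set (EuclideanSpace ℝ (Fin n))) ⊆ E := by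
        intro y hy
        rw [hT] at hy
        simp only [Finset.coe_biUnion, Set.mem_iUnion, id] at hy
        obtain ⟨t, ht, hyt⟩ := hy
        exact hsub t (hI ht) hyt
      have hTcard : (↑T : Set (EuclideanSpace ℝ (Fin n))).ncard ≤ (D + 2) ^ (l + 1) := by
        rw [Set.ncard_coe_finset]
        calc T.card ≤ ∑ t ∈ I, (id t).card := Finset.card_biUnion_le
          _ ≤ ∑ _t ∈ I, (D + 2) ^ l := by
              apply Finset.sum_le_sum
              intro t ht
              have := hI ht
              rw [hs, Finset.mem_filter] at this
              exact this.2
          _ = I.card * (D + 2) ^ l := by rw [Finset.sum_const, smul_eq_mul]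
          _ ≤ (D + 1) * (D + 2) ^ l := by
              apply Nat.mul_le_mul_right
              rw [← hD] at hIcard
              omega
          _ ≤ (D + 2) * (D + 2) ^ l := by
              apply Nat.mul_le_mul_right; omega
          _ = (D + 2) ^ (l + 1) := by ring
      obtain ⟨Px, hPx⟩ := hne (↑T) hTE hTcard
      have hPxK : Px ∈ K := by
        obtain ⟨P, h1, h2, _⟩ := hPx
        have := (h2 x (Or.inr rfl)).1
        rw [h1] at this
        exact (MvPolynomial.mem_restrictTotalDegree _ _ _).mpr this
      refine ⟨⟨Px, hPxK⟩, ?_⟩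
      rw [Set.mem_iInter₂]
      intro t ht
      apply gammaS_mono ?_ hPx
      intro y hy
      rw [hT]
      simp only [Finset.coe_biUnion, Set.mem_iUnion, id]
      exact ⟨t, ht, hy⟩
  obtain ⟨p, hp⟩ := hmain
  rw [Set.mem_iInter₂] at hp
  refine ⟨(p : MvPolynomial (Fin n) ℝ), ?_⟩
  intro S hS hScard
  have hSfin : S.Finite := hE.subset hS
  have hts : hSfin.toFinset ∈ s := by
    rw [hs, Finset.mem_filter, Finset.mem_powerset]
    constructor
    · intro y hy
      exact hE.mem_toFinset.mpr (hS (hSfin.mem_toFinset.mp hy))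
    · rw [← Set.ncard_eq_toFinset_card S hSfin]
      exact hScard
  have := hp _ hts
  rw [hF] at this
  simpa [hSfin.coe_toFinset] using this


end
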